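/- If A is an entrywise positive n×n matrix with the inverse cyclic property and d - c > 0, then A is nonsingular and A^{-1} is a Z-matrix (all off-diagonal entries nonpositive) with positive diagonal entries. -/

import Mathlib

open Matrix Finset

/-- A matrix (of order ≥ 2) has the *inverse cyclic property* if all its diagonal
entries are nonzero and the three cyclic entry conditions hold. -/
def InvCyclic {n : ℕ} (A : Matrix (Fin (n + 2)) (Fin (n + 2)) ℝ) : Prop :=
  (∀ i, A i i ≠ 0) ∧
  (∀ i k j : Fin (n + 2), i < k → k < j → A i j = A i k * A k j / A k k) ∧
  (∀ i j : Fin (n + 2), j < i → i ≠ Fin.last (n + 1) →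
    A i j = A i (Fin.last (n + 1)) * A (Fin.last (n + 1)) j /
      A (Fin.last (n + 1)) (Fin.last (n + 1))) ∧
  (∀ j : Fin (n + 2), j < Fin.last (n + 1) →
    A (Fin.last (n + 1)) j = A (Fin.last (n + 1)) 0 * A 0 j / A 0 0)

/-- `d`, the product of the diagonal entries. -/
def diagProd {n : ℕ} (A : Matrix (Fin (n + 2)) (Fin (n + 2)) ℝ) : ℝ := ∏ i, A i i

/-- `c`, the cyclic product `a₁₂a₂₃⋯a_{(n-1)n}a_{n1}`. -/
def cycProd {n : ℕ} (A : Matrix (Fin (n + 2)) (Fin (n + 2)) ℝ) : ℝ :=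
  ∏ i : Fin (n + 2), A i (i + 1)

namespace Stmt13Aux

variable {n : ℕ} {A : Matrix (Fin (n + 2)) (Fin (n + 2)) ℝ}

local notation "L" => Fin.last (n+1)

/-- step lemma along the first row -/
lemma ustep (hne : ∀ i j, A i j ≠ 0) (hic : InvCyclic A) (j : Fin (n+1)) :
    A 0 j.succ * A j.castSucc j.castSucc = A 0 j.castSucc * A j.castSucc j.succ := by
  rcases eq_or_ne j.castSucc 0 with h0 | h0
  · have h1 : j.succ = 1 := by
      rw [← Fin.coeSucc_eq_succ, h0, zero_add]
    rw [h0, h1, mul_comm]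
  · have hlt : (0 : Fin (n+2)) < j.castSucc := Fin.pos_iff_ne_zero.mpr h0
    have h := hic.2.1 0 j.castSucc j.succ hlt Fin.castSucc_lt_succ
    rw [h]
    have := hne j.castSucc j.castSucc
    field_simp

/-- the "upper triangular" structure lemma -/
lemma upper (hne : ∀ i j, A i j ≠ 0) (hic : InvCyclic A) :
    ∀ j i : Fin (n+2), i ≤ j → A i j * A 0 i = A i i * A 0 j := by
  intro j
  induction j using Fin.induction with
  | zero =>
    intro i hi
    have : i = 0 := Fin.le_zero_iff.mp hi
    subst this; ring
  | succ j ih =>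
    intro i hi
    rcases eq_or_ne i j.succ with he | hne'
    · subst he; ring
    · have hlt : i < j.succ := lt_of_le_of_ne hi hne'
      have hle : i ≤ j.castSucc := by
        rw [Fin.lt_def, Fin.val_succ] at hlt; rw [Fin.le_def]; simp; omega
      rcases eq_or_ne i j.castSucc with he2 | hne2
      · subst he2
        linear_combination (-1 : ℝ) * ustep hne hic j
      · have hlt2 : i < j.castSucc := lt_of_le_of_ne hle hne2
        have h1 := hic.2.1 i j.castSucc j.succ hlt2 Fin.castSucc_lt_succ
        have h2 := ih i hle
        have h3 := ustep hne hic j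
        rw [h1]
        have hcc := hne j.castSucc j.castSucc
        field_simp
        linear_combination A j.castSucc j.succ * h2 - A i i * h3
      
/-- the wrap-around structure lemma -/
lemma lower (hne : ∀ i j, A i j ≠ 0) (hic : InvCyclic A) :
    ∀ i j : Fin (n+2), j < i →
      A i j * (A 0 i * A 0 0 * A L L) = A i i * A 0 j * (A 0 L * A L 0) := by
  intro i j hji
  have hjL : j < L := lt_of_lt_of_le hji (Fin.le_last i)
  have h4 := hic.2.2.2 j hjL
  rcases eq_or_ne i L with he | hne'
  · subst he
    rw [h4]
    have := hne 0 0
    field_simp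
  · have h3 := hic.2.2.1 i j hji hne'
    have hU := upper hne hic L i (Fin.le_last i)
    rw [h3, h4]
    have := hne 0 0
    have := hne L L
    field_simp
    linear_combination (A L 0 * A 0 j) * hU

/-- master formula -/
lemma key (hne : ∀ i j, A i j ≠ 0) (hic : InvCyclic A) (i j : Fin (n+2)) :
    A i j * (A 0 i * A 0 0 * A L L)
      = A i i * A 0 j * (if i ≤ j then A 0 0 * A L L else A 0 L * A L 0) := by
  split_ifs with h
  · linear_combination (A 0 0 * A L L) * upper hne hic j i h
  · exact lower hne hic i j (not_le.mp h)

/-- value of c/d -/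
lemma cd (hne : ∀ i j, A i j ≠ 0) (hic : InvCyclic A) :
    cycProd A * (A 0 0 * A L L) = diagProd A * (A 0 L * A L 0) := by
  have h1 : ∀ i : Fin (n+1),
      A 0 i.succ * A i.castSucc i.castSucc = A 0 i.castSucc * A i.castSucc (i.castSucc + 1) := by
    intro i; rw [Fin.coeSucc_eq_succ]; exact ustep hne hic i
  have h2 : (∏ i : Fin (n+1), A 0 i.succ) * (∏ i : Fin (n+1), A i.castSucc i.castSucc)
      = (∏ i : Fin (n+1), A 0 i.castSucc) * (∏ i : Fin (n+1), A i.castSucc (i.castSucc + 1)) := by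
    rw [← Finset.prod_mul_distrib, ← Finset.prod_mul_distrib]
    exact Finset.prod_congr rfl (fun i _ => h1 i)
  have e1 : A 0 0 * ∏ i : Fin (n+1), A 0 i.succ = ∏ j : Fin (n+2), A 0 j :=
    (Fin.prod_univ_succ _).symm
  have e2 : (∏ i : Fin (n+1), A 0 i.castSucc) * A 0 L = ∏ j : Fin (n+2), A 0 j :=
    (Fin.prod_univ_castSucc _).symm
  have e3 : diagProd A = (∏ i : Fin (n+1), A i.castSucc i.castSucc) * A L L :=
    Fin.prod_univ_castSucc _
  have e4 : cycProd A = (∏ i : Fin (n+1), A i.castSucc (i.castSucc + 1)) * A L (L + 1) :=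
    Fin.prod_univ_castSucc _
  have e5 : (L : Fin (n+2)) + 1 = 0 := Fin.last_add_one _
  rw [e5] at e4
  have hP : (∏ j : Fin (n+2), A 0 j) ≠ 0 := Finset.prod_ne_zero_iff.mpr fun j _ => hne 0 j
  -- combine
  have : (cycProd A * (A 0 0 * A L L)) * (∏ j : Fin (n+2), A 0 j)
      = (diagProd A * (A 0 L * A L 0)) * (∏ j : Fin (n+2), A 0 j) := by
    rw [e3, e4]
    conv_lhs => rw [← e2]
    conv_rhs => rw [← e1]
    linear_combination (-(A L 0 * A 0 0 * A L L * A 0 L)) * h2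
  exact mul_right_cancel₀ hP this

end Stmt13Aux

namespace Stmt13Aux

variable {n : ℕ} {A : Matrix (Fin (n + 2)) (Fin (n + 2)) ℝ}

local notation "L" => Fin.last (n+1)

lemma sub_one_zero : (0 : Fin (n+2)) - 1 = L := by
  rw [zero_sub]; ext; rw [Fin.coe_neg_one]; simp

/-- identity (II) -/
lemma idII (hpos : ∀ i j, 0 < A i j) (hic : InvCyclic A) (k : Fin (n+2)) :
    A k (k-1) * A (k-1) k * diagProd A = cycProd A * A (k-1) (k-1) * A k k := by
  have hne : ∀ i j, A i j ≠ 0 := fun i j => (hpos i j).ne'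
  have hcd := cd hne hic
  rcases eq_or_ne k 0 with h0 | h0
  · rw [h0, sub_one_zero]
    linear_combination (-1 : ℝ) * hcd
  · have hmk : k - 1 < k := by
      have h0' : 0 < k.val := Fin.pos_iff_ne_zero.mpr h0
      rw [Fin.lt_def, Fin.coe_sub_one, if_neg h0]; omega
    have h_lo := lower hne hic k (k-1) hmk
    have h_up := upper hne hic k (k-1) (le_of_lt hmk)
    have hX : A 0 k * A 0 0 * A L L * A 0 (k-1) ≠ 0 :=
      mul_ne_zero (mul_ne_zero (mul_ne_zero (hne _ _) (hne _ _)) (hne _ _)) (hne _ _)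
    have H : (A k (k-1) * A (k-1) k * diagProd A) * (A 0 k * A 0 0 * A L L * A 0 (k-1))
        = (cycProd A * A (k-1) (k-1) * A k k) * (A 0 k * A 0 0 * A L L * A 0 (k-1)) := by
      linear_combination (A (k-1) k * diagProd A * A 0 (k-1)) * h_lo
        + (diagProd A * A 0 (k-1) * A k k * A 0 L * A L 0) * h_up
        + (-(A (k-1) (k-1) * A k k * A 0 k * A 0 (k-1))) * hcd
    exact mul_right_cancel₀ hX H

/-- identity (I) -/
lemma idI (hpos : ∀ i j, 0 < A i j) (hic : InvCyclic A) (i k : Fin (n+2)) (hik : i ≠ k) :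
    A i k * A (k-1) (k-1) = A i (k-1) * A (k-1) k := by
  have hne : ∀ i j, A i j ≠ 0 := fun i j => (hpos i j).ne'
  rcases eq_or_ne k 0 with h0 | h0
  · rw [h0, sub_one_zero]
    rcases eq_or_ne i L with hiL | hiL
    · subst hiL; ring
    · have hi0 : (0 : Fin (n+2)) < i := Fin.pos_iff_ne_zero.mpr (h0 ▸ hik)
      have h_up := upper hne hic L i (Fin.le_last i)
      have h_lo := lower hne hic i 0 hi0
      have hX : A 0 i * A 0 0 * A L L ≠ 0 :=
        mul_ne_zero (mul_ne_zero (hne _ _) (hne _ _)) (hne _ _)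
      have H : (A i 0 * A L L) * (A 0 i * A 0 0 * A L L)
          = (A i L * A L 0) * (A 0 i * A 0 0 * A L L) := by
        linear_combination (A L L) * h_lo - (A L 0 * A 0 0 * A L L) * h_up
      exact mul_right_cancel₀ hX H
  · have h0' : 0 < k.val := Fin.pos_iff_ne_zero.mpr h0
    have hmval : (k-1).val = k.val - 1 := by rw [Fin.coe_sub_one, if_neg h0]
    have hmk : k - 1 < k := by rw [Fin.lt_def, hmval]; omega
    rcases lt_or_gt_of_ne hik with hlt | hgt
    · have him : i ≤ k - 1 := by
        rw [Fin.le_def, hmval]; rw [Fin.lt_def] at hlt; omega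
      have h1 := upper hne hic k i (le_of_lt hlt)
      have h2 := upper hne hic (k-1) i him
      have h3 := upper hne hic k (k-1) (le_of_lt hmk)
      have hX : A 0 i * A 0 (k-1) ≠ 0 := mul_ne_zero (hne _ _) (hne _ _)
      have H : (A i k * A (k-1) (k-1)) * (A 0 i * A 0 (k-1))
          = (A i (k-1) * A (k-1) k) * (A 0 i * A 0 (k-1)) := by
        linear_combination (A (k-1) (k-1) * A 0 (k-1)) * h1 - (A (k-1) (k-1) * A 0 k) * h2
          - (A i (k-1) * A 0 i) * h3
      exact mul_right_cancel₀ hX H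
    · have hmi : k - 1 < i := lt_trans hmk hgt
      have h1 := lower hne hic i k hgt
      have h2 := lower hne hic i (k-1) hmi
      have h3 := upper hne hic k (k-1) (le_of_lt hmk)
      have hX : A 0 i * A 0 0 * A L L * A 0 (k-1) ≠ 0 :=
        mul_ne_zero (mul_ne_zero (mul_ne_zero (hne _ _) (hne _ _)) (hne _ _)) (hne _ _)
      have H : (A i k * A (k-1) (k-1)) * (A 0 i * A 0 0 * A L L * A 0 (k-1))
          = (A i (k-1) * A (k-1) k) * (A 0 i * A 0 0 * A L L * A 0 (k-1)) := by
        linear_combination (A (k-1) (k-1) * A 0 (k-1)) * h1 - (A (k-1) k * A 0 (k-1)) * h2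
          - (A i i * A 0 (k-1) * A 0 L * A L 0) * h3
      exact mul_right_cancel₀ hX H

end Stmt13Aux

open Stmt13Aux in
theorem stmt13 {n : ℕ} (A : Matrix (Fin (n + 2)) (Fin (n + 2)) ℝ)
    (hpos : ∀ i j, 0 < A i j) (hic : InvCyclic A) (hdc : 0 < diagProd A - cycProd A) :
    A.det ≠ 0 ∧ (∀ i j, i ≠ j → A⁻¹ i j ≤ 0) ∧ (∀ i, 0 < A⁻¹ i i) := by
  have hne : ∀ i j, A i j ≠ 0 := fun i j => (hpos i j).ne'
  set d := diagProd A with hd_def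
  set c := cycProd A with hc_def
  have hd : 0 < d := Finset.prod_pos (fun i _ => hpos i i)
  have hc : 0 < c := Finset.prod_pos (fun i _ => hpos i _)
  have hdc0 : d - c ≠ 0 := ne_of_gt hdc
  set E : Matrix (Fin (n+2)) (Fin (n+2)) ℝ := Matrix.of fun i j =>
    if j = i then d / ((d - c) * A i i)
    else if j = i + 1 then -(d * A i j) / ((d - c) * A i i * A j j) else 0 with hE
  have hone : (1 : Fin (n+2)) ≠ 0 := by
    intro h
    have := congrArg Fin.val h
    simp at this
  have hAE : A * E = 1 := by
    ext i k
    rw [Matrix.mul_apply]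
    have hk1k : k - 1 ≠ k := by
      intro h
      exact hone (by rwa [sub_eq_self] at h)
    have hvan : ∀ x ∈ (univ : Finset (Fin (n+2))), x ∉ ({k - 1, k} : Finset (Fin (n+2)))
        → A i x * E x k = 0 := by
      intro x _ hx
      simp only [Finset.mem_insert, Finset.mem_singleton, not_or] at hx
      have h1 : k ≠ x := fun h => hx.2 h.symm
      have h2 : k ≠ x + 1 := by
        intro h
        exact hx.1 (by rw [h, add_sub_cancel_right])
      rw [hE]
      simp only [Matrix.of_apply, if_neg h1, if_neg h2, mul_zero]
    rw [← Finset.sum_subset (Finset.subset_univ ({k - 1, k} : Finset (Fin (n+2)))) hvan]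
    rw [Finset.sum_insert (Finset.notMem_singleton.mpr hk1k), Finset.sum_singleton]
    have hEkk : E k k = d / ((d - c) * A k k) := by rw [hE]; simp
    have hEmk : E (k-1) k = -(d * A (k-1) k) / ((d - c) * A (k-1) (k-1) * A k k) := by
      rw [hE]
      simp only [Matrix.of_apply]
      rw [if_neg hk1k.symm, if_pos (sub_add_cancel k 1).symm]
    rw [hEkk, hEmk]
    rcases eq_or_ne i k with he | hne'
    · subst he
      rw [Matrix.one_apply_eq]
      have h2 := idII hpos hic i
      rw [← hd_def, ← hc_def] at h2
      have := hne i i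
      have := hne (i-1) (i-1)
      field_simp
      linear_combination (-1 : ℝ) * h2
    · rw [Matrix.one_apply_ne hne']
      have h1 := idI hpos hic i k hne'
      have := hne k k
      have := hne (k-1) (k-1)
      field_simp
      linear_combination d * h1
  have hinv : A⁻¹ = E := Matrix.inv_eq_right_inv hAE
  refine ⟨(Matrix.isUnit_det_of_right_inverse hAE).ne_zero, ?_, ?_⟩
  · intro i j hij
    rw [hinv, hE]
    simp only [Matrix.of_apply, if_neg (fun h : j = i => hij h.symm)]
    split_ifs with h
    · rw [neg_div]
      exact neg_nonpos.mpr (div_nonneg (mul_nonneg hd.le (hpos i j).le)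
        (mul_nonneg (mul_nonneg hdc.le (hpos i i).le) (hpos j j).le))
    · exact le_rfl
  · intro i
    rw [hinv, hE]
    simp only [Matrix.of_apply, if_pos rfl]
    exact div_pos hd (mul_pos hdc (hpos i i))
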